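/- arXiv:2411.06551 — 4 statements merged into one kernel-verified Lean document; each statement's English description precedes it below -/
import Mathlib

section
/- Let Γ, Δ > 0 and l > 0, with N > N* (so the quadratic P(A) = (lN+1)A² + (Γ+Δ−N)A + ΓΔ has two distinct positive roots A₁ < A₂). Then both roots satisfy 0 < A₁ < A₂ < 1/l. -/
theorem stmt5 (Γ Δ l N A₁ A₂ : ℝ) (hΓ : 0 < Γ) (hΔ : 0 < Δ) (hl : 0 < l)
    (hNstar : Γ + Δ + 2 * l * Γ * Δ +
      2 * Real.sqrt (Γ * Δ + l * (Γ + Δ) * Γ * Δ + l ^ 2 * Γ ^ 2 * Δ ^ 2) < N)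
    (h1 : (l * N + 1) * A₁ ^ 2 + (Γ + Δ - N) * A₁ + Γ * Δ = 0)
    (h2 : (l * N + 1) * A₂ ^ 2 + (Γ + Δ - N) * A₂ + Γ * Δ = 0)
    (h12 : A₁ < A₂) :
    0 < A₁ ∧ A₂ < 1 / l := by
  have hsq : (0:ℝ) ≤ Real.sqrt (Γ * Δ + l * (Γ + Δ) * Γ * Δ + l ^ 2 * Γ ^ 2 * Δ ^ 2) :=
    Real.sqrt_nonneg _
  have hN : Γ + Δ < N := by nlinarith [mul_pos (mul_pos hl hΓ) hΔ]
  have hc : 0 < l * N + 1 := by nlinarith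
  have hfac : (A₁ - A₂) * ((l * N + 1) * (A₁ + A₂) + (Γ + Δ - N)) = 0 := by
    linear_combination h1 - h2
  have hsum : (l * N + 1) * (A₁ + A₂) = N - Γ - Δ := by
    rcases mul_eq_zero.mp hfac with h | h
    · exact absurd h (sub_ne_zero.mpr (ne_of_lt h12))
    · linarith
  have hprod : (l * N + 1) * (A₁ * A₂) = Γ * Δ := by
    linear_combination A₁ * hsum - h1
  have hA1 : 0 < A₁ := by
    by_contra h
    push_neg at h
    nlinarith [mul_pos hΓ hΔ, mul_pos hc (sub_pos.mpr hN)]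
  -- sum < 1/l  (times (l*N+1)*l)
  have hsuml : l * (A₁ + A₂) < 1 := by
    have h1' : (l * N + 1) * (l * (A₁ + A₂)) = l * (N - Γ - Δ) := by
      linear_combination l * hsum
    nlinarith [mul_pos (mul_pos hl hΓ) hΔ]
  have hA1l : l * A₁ < 1 := by nlinarith
  have hP : (l * N + 1) * ((1 - l * A₁) * (1 - l * A₂)) =
      1 + (Γ + Δ) * l + Γ * Δ * l ^ 2 := by
    linear_combination l ^ 2 * hprod - l * hsum
  have hpos : 0 < (1 - l * A₁) * (1 - l * A₂) := by
    nlinarith [mul_pos hΓ hΔ, mul_pos hΓ hl, mul_pos hΔ hl, sq_nonneg l]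
  have hA2l : l * A₂ < 1 := by nlinarith
  refine ⟨hA1, ?_⟩
  rw [lt_div_iff₀ hl]
  linarith [hA2l]
end

section
/- With L as above (all parameters positive, 0 < ω < 1, 0 < p, q ≤ 1) and R < 1, the matrix L is invertible, and the unique solution y = (B, Q_H, Q_V, R_H, R_V) of L·y + (f,0,0,0,0)ᵀ = 0 for f > 0 satisfies a_H·R_H + a_V·R_V = f·R/(1−R). -/
set_option maxHeartbeats 1000000 in
theorem stmt10 (b μB ω p q aH aV σH σV μQH μQV μRH μRV f : ℝ)
    (hb : 0 < b) (hμB : 0 < μB) (haH : 0 < aH) (haV : 0 < aV)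
    (hσH : 0 < σH) (hσV : 0 < σV) (hμQH : 0 < μQH) (hμQV : 0 < μQV)
    (hμRH : 0 < μRH) (hμRV : 0 < μRV)
    (hω : 0 < ω) (hω1 : ω < 1) (hp0 : 0 < p) (hp : p ≤ 1) (hq0 : 0 < q) (hq : q ≤ 1)
    (hf : 0 < f)
    (L : Matrix (Fin 5) (Fin 5) ℝ)
    (hL : L = Matrix.of !![-(b + μB), 0, 0, aH, aV;
        b * ω, -(μQH + σH), 0, 0, 0;
        b * (1 - ω), 0, -(μQV + σV), 0, 0;
        0, p * σH, 0, -(μRH + aH), 0;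
        0, 0, q * σV, 0, -(μRV + aV)])
    (R : ℝ)
    (hR : R = b / (b + μB) *
        ((1 - ω) * q * aV * σV / ((μRV + aV) * (μQV + σV)) +
          ω * p * aH * σH / ((μRH + aH) * (μQH + σH))))
    (hR1 : R < 1) :
    IsUnit L.det ∧
      ∀ y : Fin 5 → ℝ, L.mulVec y + ![f, 0, 0, 0, 0] = 0 →
        aH * y 3 + aV * y 4 = f * R / (1 - R) := by

  have hTB : (0:ℝ) < b + μB := by linarith
  have hQH : (0:ℝ) < μQH + σH := by linarith
  have hQV : (0:ℝ) < μQV + σV := by linarith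
  have hRH : (0:ℝ) < μRH + aH := by linarith
  have hRV : (0:ℝ) < μRV + aV := by linarith
  have h1R : (0:ℝ) < 1 - R := by linarith
  have hdet0 : L.det
      = -((b + μB) * (μQH + σH) * (μQV + σV) * (μRH + aH) * (μRV + aV))
        + aH * (b * ω) * (p * σH) * (μQV + σV) * (μRV + aV)
        + aV * (b * (1 - ω)) * (q * σV) * (μQH + σH) * (μRH + aH) := by
    subst hL
    rw [show ∀ M : Matrix (Fin 5) (Fin 5) ℝ, Matrix.of M = M from fun _ => rfl]
    simp [Matrix.det_succ_row_zero, Fin.sum_univ_succ, Fin.succAbove, Fin.castSucc,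
      Fin.castAdd, Fin.castLE]
    ring
  have hdet : L.det = -((b + μB) * (μQH + σH) * (μQV + σV) * (μRH + aH) * (μRV + aV) * (1 - R)) := by
    rw [hdet0, hR]; field_simp; ring
  constructor
  · rw [hdet]
    have hpos : (0:ℝ) < (b + μB) * (μQH + σH) * (μQV + σV) * (μRH + aH) * (μRV + aV) * (1 - R) :=
      mul_pos (mul_pos (mul_pos (mul_pos (mul_pos hTB hQH) hQV) hRH) hRV) h1R
    exact isUnit_iff_ne_zero.mpr (neg_ne_zero.mpr hpos.ne')
  · intro y hy
    have h0 := congrFun hy 0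
    have h1 := congrFun hy 1
    have h2 := congrFun hy 2
    have h3 := congrFun hy 3
    have h4 := congrFun hy 4
    rw [show ∀ M : Matrix (Fin 5) (Fin 5) ℝ, Matrix.of M = M from fun _ => rfl] at hL
    simp [hL, Matrix.mulVec, dotProduct, Fin.sum_univ_five] at h0 h1 h2 h3 h4
    have e1 : y 1 = b * ω * y 0 / (μQH + σH) := by field_simp; linarith
    have e2 : y 2 = b * (1 - ω) * y 0 / (μQV + σV) := by field_simp; linarith
    have e3 : y 3 = p * σH * (b * ω * y 0) / ((μQH + σH) * (μRH + aH)) := by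
      rw [e1] at h3; field_simp at h3 ⊢; linarith
    have e4 : y 4 = q * σV * (b * (1 - ω) * y 0) / ((μQV + σV) * (μRV + aV)) := by
      rw [e2] at h4; field_simp at h4 ⊢; linarith
    have key : aH * y 3 + aV * y 4 = (b + μB) * R * y 0 := by
      rw [e3, e4, hR]; field_simp; ring
    have h0' : (b + μB) * y 0 = aH * y 3 + aV * y 4 + f := by linarith
    rw [key] at h0' ⊢
    rw [eq_div_iff h1R.ne']
    linear_combination R * h0'
end

section
/- With L as above and R < 1, the unique solution of L·y + (f,0,0,0,0)ᵀ = 0 for f > 0 is given explicitly by B = f/(T_B(1−R)), Q_H = f·bω/(T_{Q_H}T_B(1−R)), Q_V = f·b(1−ω)/(T_{Q_V}T_B(1−R)), R_H = f·bωpσ_H/(T_{R_H}T_{Q_H}T_B(1−R)), R_V = f·b(1−ω)qσ_V/(T_{R_V}T_{Q_V}T_B(1−R)); in particular all components are strictly positive. -/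
theorem stmt11 (b μB ω p q aH aV σH σV μQH μQV μRH μRV f : ℝ)
    (hb : 0 < b) (hμB : 0 < μB) (haH : 0 < aH) (haV : 0 < aV)
    (hσH : 0 < σH) (hσV : 0 < σV) (hμQH : 0 < μQH) (hμQV : 0 < μQV)
    (hμRH : 0 < μRH) (hμRV : 0 < μRV)
    (hω : 0 < ω) (hω1 : ω < 1) (hp0 : 0 < p) (hp : p ≤ 1) (hq0 : 0 < q) (hq : q ≤ 1)
    (hf : 0 < f)
    (L : Matrix (Fin 5) (Fin 5) ℝ)
    (hL : L = Matrix.of !![-(b + μB), 0, 0, aH, aV;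
        b * ω, -(μQH + σH), 0, 0, 0;
        b * (1 - ω), 0, -(μQV + σV), 0, 0;
        0, p * σH, 0, -(μRH + aH), 0;
        0, 0, q * σV, 0, -(μRV + aV)])
    (R : ℝ)
    (hR : R = b / (b + μB) *
        ((1 - ω) * q * aV * σV / ((μRV + aV) * (μQV + σV)) +
          ω * p * aH * σH / ((μRH + aH) * (μQH + σH))))
    (hR1 : R < 1) :
    ∀ y : Fin 5 → ℝ, L.mulVec y + ![f, 0, 0, 0, 0] = 0 →
      (y 0 = f / ((b + μB) * (1 - R)) ∧
       y 1 = f * (b * ω) / ((μQH + σH) * (b + μB) * (1 - R)) ∧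
       y 2 = f * (b * (1 - ω)) / ((μQV + σV) * (b + μB) * (1 - R)) ∧
       y 3 = f * (b * ω * p * σH) / ((μRH + aH) * (μQH + σH) * (b + μB) * (1 - R)) ∧
       y 4 = f * (b * (1 - ω) * q * σV) /
          ((μRV + aV) * (μQV + σV) * (b + μB) * (1 - R))) ∧
      ∀ i : Fin 5, 0 < y i := by
  intro y hy
  have h0 := congrFun hy 0
  have h1 := congrFun hy 1
  have h2 := congrFun hy 2
  have h3 := congrFun hy 3
  have h4 := congrFun hy 4
  have hL' : L = !![-(b + μB), 0, 0, aH, aV;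
      b * ω, -(μQH + σH), 0, 0, 0;
      b * (1 - ω), 0, -(μQV + σV), 0, 0;
      0, p * σH, 0, -(μRH + aH), 0;
      0, 0, q * σV, 0, -(μRV + aV)] := hL
  simp [hL', Matrix.mulVec, dotProduct, Fin.sum_univ_five] at h0 h1 h2 h3 h4
  have h1ω : 0 < 1 - ω := by linarith
  have hTB : (0:ℝ) < b + μB := by linarith
  have hQH : (0:ℝ) < μQH + σH := by linarith
  have hQV : (0:ℝ) < μQV + σV := by linarith
  have hRH : (0:ℝ) < μRH + aH := by linarith
  have hRV : (0:ℝ) < μRV + aV := by linarith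
  have h1R : (0:ℝ) < 1 - R := by linarith
  -- relation y3 in terms of y0
  have e3 : (μRH + aH) * (μQH + σH) * y 3 = p * σH * (b * ω) * y 0 := by
    linear_combination (-(μQH + σH)) * h3 + (-(p * σH)) * h1
  have e4 : (μRV + aV) * (μQV + σV) * y 4 = q * σV * (b * (1 - ω)) * y 0 := by
    linear_combination (-(μQV + σV)) * h4 + (-(q * σV)) * h2
  have hR' : R * ((b + μB) * ((μRV + aV) * (μQV + σV)) * ((μRH + aH) * (μQH + σH))) =
      b * ((1 - ω) * q * aV * σV * ((μRH + aH) * (μQH + σH)) +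
        ω * p * aH * σH * ((μRV + aV) * (μQV + σV))) := by
    rw [hR]; field_simp
  have hkey0 : ((b + μB) * (1 - R)) * y 0 *
      ((μRV + aV) * (μQV + σV) * ((μRH + aH) * (μQH + σH))) =
      f * ((μRV + aV) * (μQV + σV) * ((μRH + aH) * (μQH + σH))) := by
    linear_combination (-((μRV + aV) * (μQV + σV) * ((μRH + aH) * (μQH + σH)))) * h0
      + (-(y 0)) * hR' + (aH * ((μRV + aV) * (μQV + σV))) * e3
      + (aV * ((μRH + aH) * (μQH + σH))) * e4
  have hkey0' : ((b + μB) * (1 - R)) * y 0 = f :=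
    mul_right_cancel₀ (by positivity) hkey0
  have hkey : y 0 = f / ((b + μB) * (1 - R)) := by
    rw [eq_div_iff (by positivity)]; linear_combination hkey0'
  have hk1 : y 1 = f * (b * ω) / ((μQH + σH) * (b + μB) * (1 - R)) := by
    rw [eq_div_iff (by positivity)]
    linear_combination (-((b + μB) * (1 - R))) * h1 + (b * ω) * hkey0'
  have hk2 : y 2 = f * (b * (1 - ω)) / ((μQV + σV) * (b + μB) * (1 - R)) := by
    rw [eq_div_iff (by positivity)]
    linear_combination (-((b + μB) * (1 - R))) * h2 + (b * (1 - ω)) * hkey0'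
  have hk3 : y 3 = f * (b * ω * p * σH) / ((μRH + aH) * (μQH + σH) * (b + μB) * (1 - R)) := by
    rw [eq_div_iff (by positivity)]
    linear_combination ((b + μB) * (1 - R)) * e3 + (p * σH * (b * ω)) * hkey0'
  have hk4 : y 4 = f * (b * (1 - ω) * q * σV) /
      ((μRV + aV) * (μQV + σV) * (b + μB) * (1 - R)) := by
    rw [eq_div_iff (by positivity)]
    linear_combination ((b + μB) * (1 - R)) * e4 + (q * σV * (b * (1 - ω))) * hkey0'
  refine ⟨⟨hkey, hk1, hk2, hk3, hk4⟩, ?_⟩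
  intro i
  fin_cases i
  · show (0:ℝ) < y 0; rw [hkey]; positivity
  · show (0:ℝ) < y 1; rw [hk1]; positivity
  · show (0:ℝ) < y 2; rw [hk2]; positivity
  · show (0:ℝ) < y 3; rw [hk3]; positivity
  · show (0:ℝ) < y 4; rw [hk4]; positivity
end

section
/- Let μ, ξ, γ > 0 and let A : [0,∞) → ℝ be continuous with 0 ≤ A(t) ≤ L for all t. For ε > 0, let M_ε solve εM' = ξγA(t) − μM with M_ε(0) = M₀ ≥ 0. Then for any t₀ > 0, sup_{t ≥ t₀} |M_ε(t) − ξγA(t)/μ| → 0 as ε → 0⁺, provided A is Lipschitz on [0,∞). -/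
open Real intervalIntegral

theorem keybound (μ ξ γ L K M₀ : ℝ) (hμ : 0 < μ) (hξ : 0 < ξ) (hγ : 0 < γ)
    (A : ℝ → ℝ) (hAbd : ∀ t, 0 ≤ t → 0 ≤ A t ∧ A t ≤ L)
    (hALip : ∀ s t : ℝ, |A s - A t| ≤ K * |s - t|)
    (Mf : ℝ → ℝ) (ε : ℝ) (hε : 0 < ε)
    (hM : ∀ t : ℝ, 0 ≤ t → HasDerivAt Mf ((ξ * γ * A t - μ * Mf t) / ε) t)
    (hM0 : Mf 0 = M₀) (hM₀ : 0 ≤ M₀)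
    (t : ℝ) (ht : 0 < t) :
    |Mf t - ξ * γ * A t / μ| ≤
      Real.exp (-(μ * t / ε)) * (M₀ + ξ * γ * L / μ) + ξ * γ * K * ε / μ ^ 2 := by
  have hK : 0 ≤ K := by
    have h := hALip 1 0
    simp only [sub_zero, abs_one, mul_one] at h
    exact le_trans (abs_nonneg _) h
  have hAcont : Continuous A := by
    refine (LipschitzWith.continuous (K := ⟨K, hK⟩) ?_)
    refine LipschitzWith.of_dist_le_mul fun x y => ?_
    rw [Real.dist_eq, Real.dist_eq]; exact hALip x y
  have ht0 : (0:ℝ) ≤ t := ht.le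
  have huIcc : Set.uIcc (0:ℝ) t = Set.Icc 0 t := Set.uIcc_of_le ht0
  -- Integral representation (forward form)
  have key : Real.exp (μ * t / ε) * Mf t - M₀ =
      ∫ s in (0:ℝ)..t, Real.exp (μ * s / ε) * (ξ * γ * A s) / ε := by
    have hderiv : ∀ s ∈ Set.uIcc (0:ℝ) t,
        HasDerivAt (fun u => Real.exp (μ * u / ε) * Mf u)
          (Real.exp (μ * s / ε) * (ξ * γ * A s) / ε) s := by
      intro s hs
      rw [huIcc] at hs
      have h1 : HasDerivAt (fun u => Real.exp (μ * u / ε)) (μ / ε * Real.exp (μ * s / ε)) s := by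
        have : HasDerivAt (fun u : ℝ => μ * u / ε) (μ / ε) s := by
          simpa using ((hasDerivAt_id s).const_mul μ).div_const ε
        simpa [mul_comm] using this.exp
      have h2 := (h1.mul (hM s hs.1))
      refine HasDerivAt.congr_deriv h2 ?_
      field_simp
      ring
    have hint : IntervalIntegrable (fun s => Real.exp (μ * s / ε) * (ξ * γ * A s) / ε)
        MeasureTheory.volume 0 t := by
      apply Continuous.intervalIntegrable; fun_prop
    rw [intervalIntegral.integral_eq_sub_of_hasDerivAt hderiv hint]
    simp [hM0]
  have hEe : Real.exp (-(μ * t / ε)) * Real.exp (μ * t / ε) = 1 := by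
    rw [← Real.exp_add]; simp
  -- pull the exponential inside
  have hpull : ∫ s in (0:ℝ)..t, Real.exp (-(μ * (t - s) / ε)) * (ξ * γ * A s) / ε
      = Real.exp (-(μ * t / ε)) * ∫ s in (0:ℝ)..t, Real.exp (μ * s / ε) * (ξ * γ * A s) / ε := by
    rw [← intervalIntegral.integral_const_mul]
    refine intervalIntegral.integral_congr fun s _ => ?_
    have h : -(μ * (t - s) / ε) = -(μ * t / ε) + μ * s / ε := by ring
    rw [h, Real.exp_add]; ring
  have rep : Mf t = Real.exp (-(μ * t / ε)) * M₀
      + ∫ s in (0:ℝ)..t, Real.exp (-(μ * (t - s) / ε)) * (ξ * γ * A s) / ε := by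
    rw [hpull, ← key]
    have h : Real.exp (-(μ * t / ε)) * M₀
        + Real.exp (-(μ * t / ε)) * (Real.exp (μ * t / ε) * Mf t - M₀)
        = (Real.exp (-(μ * t / ε)) * Real.exp (μ * t / ε)) * Mf t := by ring
    rw [h, hEe, one_mul]
  -- ∫ of the pure exponential
  have int_const : ∫ s in (0:ℝ)..t, Real.exp (-(μ * (t - s) / ε)) * (ξ * γ / ε)
      = ξ * γ / μ * (1 - Real.exp (-(μ * t / ε))) := by
    have hderiv : ∀ s ∈ Set.uIcc (0:ℝ) t,
        HasDerivAt (fun u => ξ * γ / μ * Real.exp (-(μ * (t - u) / ε)))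
          (Real.exp (-(μ * (t - s) / ε)) * (ξ * γ / ε)) s := by
      intro s _
      have hin : HasDerivAt (fun u : ℝ => -(μ * (t - u) / ε)) (μ / ε) s := by
        have hfun : (fun u : ℝ => -(μ * (t - u) / ε)) = fun u => μ / ε * u - μ * t / ε := by
          funext u; ring
        rw [hfun]
        simpa using ((hasDerivAt_id s).const_mul (μ / ε)).sub_const (μ * t / ε)
      have := (hin.exp).const_mul (ξ * γ / μ)
      refine HasDerivAt.congr_deriv this ?_
      field_simp
    have hint : IntervalIntegrable (fun s => Real.exp (-(μ * (t - s) / ε)) * (ξ * γ / ε))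
        MeasureTheory.volume 0 t := by
      apply Continuous.intervalIntegrable; fun_prop
    rw [intervalIntegral.integral_eq_sub_of_hasDerivAt hderiv hint]
    simp only [sub_self, mul_zero, zero_div, neg_zero, Real.exp_zero, sub_zero]
    ring
  -- ∫ exp * (t - s)
  have int_lin : ∫ s in (0:ℝ)..t, Real.exp (-(μ * (t - s) / ε)) * (t - s)
      = (ε / μ) ^ 2 - Real.exp (-(μ * t / ε)) * (ε / μ * t + (ε / μ) ^ 2) := by
    have hderiv : ∀ s ∈ Set.uIcc (0:ℝ) t,
        HasDerivAt (fun u => ε / μ * Real.exp (-(μ * (t - u) / ε)) * (t - u)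
            + (ε / μ) ^ 2 * Real.exp (-(μ * (t - u) / ε)))
          (Real.exp (-(μ * (t - s) / ε)) * (t - s)) s := by
      intro s _
      have hin : HasDerivAt (fun u : ℝ => -(μ * (t - u) / ε)) (μ / ε) s := by
        have hfun : (fun u : ℝ => -(μ * (t - u) / ε)) = fun u => μ / ε * u - μ * t / ε := by
          funext u; ring
        rw [hfun]
        simpa using ((hasDerivAt_id s).const_mul (μ / ε)).sub_const (μ * t / ε)
      have hexp := hin.exp
      have hlin : HasDerivAt (fun u : ℝ => t - u) (-1 : ℝ) s := by
        simpa using (hasDerivAt_id s).const_sub t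
      have h1 := (hexp.const_mul (ε / μ)).mul hlin
      have h2 := hexp.const_mul ((ε / μ) ^ 2)
      have := h1.add h2
      refine HasDerivAt.congr_deriv this ?_
      field_simp; ring
    have hint : IntervalIntegrable (fun s => Real.exp (-(μ * (t - s) / ε)) * (t - s))
        MeasureTheory.volume 0 t := by
      apply Continuous.intervalIntegrable; fun_prop
    rw [intervalIntegral.integral_eq_sub_of_hasDerivAt hderiv hint]
    simp only [sub_self, mul_zero, zero_div, neg_zero, Real.exp_zero, sub_zero, mul_one]
    ring
  -- split the difference integral
  have hi1 : IntervalIntegrable (fun s => Real.exp (-(μ * (t - s) / ε)) * (ξ * γ * A s) / ε)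
      MeasureTheory.volume 0 t := by
    apply Continuous.intervalIntegrable; fun_prop
  have hi2 : IntervalIntegrable (fun s => Real.exp (-(μ * (t - s) / ε)) * (ξ * γ / ε) * A t)
      MeasureTheory.volume 0 t := by
    apply Continuous.intervalIntegrable; fun_prop
  have hsplit : ∫ s in (0:ℝ)..t, Real.exp (-(μ * (t - s) / ε)) * (ξ * γ / ε) * (A s - A t)
      = (∫ s in (0:ℝ)..t, Real.exp (-(μ * (t - s) / ε)) * (ξ * γ * A s) / ε)
        - (∫ s in (0:ℝ)..t, Real.exp (-(μ * (t - s) / ε)) * (ξ * γ / ε)) * A t := by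
    rw [← intervalIntegral.integral_mul_const, ← intervalIntegral.integral_sub hi1 hi2]
    refine intervalIntegral.integral_congr fun s _ => ?_
    ring
  have decomp : Mf t - ξ * γ * A t / μ = Real.exp (-(μ * t / ε)) * (M₀ - ξ * γ * A t / μ)
      + ∫ s in (0:ℝ)..t, Real.exp (-(μ * (t - s) / ε)) * (ξ * γ / ε) * (A s - A t) := by
    rw [hsplit, int_const, rep]
    ring
  -- bound the integral term
  have habs : |∫ s in (0:ℝ)..t, Real.exp (-(μ * (t - s) / ε)) * (ξ * γ / ε) * (A s - A t)|
      ≤ ξ * γ * K * ε / μ ^ 2 := by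
    have hif : IntervalIntegrable (fun s => Real.exp (-(μ * (t - s) / ε)) * (ξ * γ / ε) * (A s - A t))
        MeasureTheory.volume 0 t := by
      apply Continuous.intervalIntegrable; fun_prop
    have hig : IntervalIntegrable (fun s => Real.exp (-(μ * (t - s) / ε)) * (ξ * γ / ε) * (K * (t - s)))
        MeasureTheory.volume 0 t := by
      apply Continuous.intervalIntegrable; fun_prop
    have hb1 : |∫ s in (0:ℝ)..t, Real.exp (-(μ * (t - s) / ε)) * (ξ * γ / ε) * (A s - A t)|
        ≤ ∫ s in (0:ℝ)..t, Real.exp (-(μ * (t - s) / ε)) * (ξ * γ / ε) * (K * (t - s)) := by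
      calc |∫ s in (0:ℝ)..t, Real.exp (-(μ * (t - s) / ε)) * (ξ * γ / ε) * (A s - A t)|
          ≤ ∫ s in (0:ℝ)..t, |Real.exp (-(μ * (t - s) / ε)) * (ξ * γ / ε) * (A s - A t)| :=
            intervalIntegral.abs_integral_le_integral_abs ht0
        _ ≤ ∫ s in (0:ℝ)..t, Real.exp (-(μ * (t - s) / ε)) * (ξ * γ / ε) * (K * (t - s)) := by
            apply intervalIntegral.integral_mono_on ht0 hif.abs hig
            intro s hs
            have he : 0 ≤ Real.exp (-(μ * (t - s) / ε)) := (Real.exp_pos _).le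
            have hc : 0 ≤ Real.exp (-(μ * (t - s) / ε)) * (ξ * γ / ε) := by positivity
            rw [abs_mul, abs_of_nonneg hc]
            have hl := hALip s t
            have habs' : |s - t| = t - s := by
              rw [abs_of_nonpos (by linarith [hs.2])]; ring
            rw [habs'] at hl
            exact mul_le_mul_of_nonneg_left hl hc
    have hb2 : ∫ s in (0:ℝ)..t, Real.exp (-(μ * (t - s) / ε)) * (ξ * γ / ε) * (K * (t - s))
        = (ξ * γ / ε * K) * ((ε / μ) ^ 2 - Real.exp (-(μ * t / ε)) * (ε / μ * t + (ε / μ) ^ 2)) := by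
      rw [← int_lin, ← intervalIntegral.integral_const_mul]
      refine intervalIntegral.integral_congr fun s _ => ?_
      ring
    have hfe : (ξ * γ / ε * K) * (ε / μ) ^ 2 = ξ * γ * K * ε / μ ^ 2 := by
      field_simp
    have hnn : 0 ≤ Real.exp (-(μ * t / ε)) * (ε / μ * t + (ε / μ) ^ 2) := by positivity
    have hck : 0 ≤ ξ * γ / ε * K := by positivity
    calc |∫ s in (0:ℝ)..t, Real.exp (-(μ * (t - s) / ε)) * (ξ * γ / ε) * (A s - A t)|
        ≤ (ξ * γ / ε * K) * ((ε / μ) ^ 2 - Real.exp (-(μ * t / ε)) * (ε / μ * t + (ε / μ) ^ 2)) := by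
          rw [← hb2]; exact hb1
      _ ≤ (ξ * γ / ε * K) * (ε / μ) ^ 2 := by
          apply mul_le_mul_of_nonneg_left _ hck
          linarith
      _ = ξ * γ * K * ε / μ ^ 2 := hfe
  -- bound the first term
  have hA := hAbd t ht0
  have hq1 : 0 ≤ ξ * γ * A t / μ :=
    div_nonneg (by nlinarith [hA.1, mul_pos hξ hγ]) hμ.le
  have hq2 : ξ * γ * A t / μ ≤ ξ * γ * L / μ :=
    (div_le_div_iff_of_pos_right hμ).mpr (by nlinarith [hA.2, mul_pos hξ hγ])
  have h1 : |M₀ - ξ * γ * A t / μ| ≤ M₀ + ξ * γ * L / μ := by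
    rw [abs_le]
    constructor <;> linarith
  have hEpos : (0:ℝ) < Real.exp (-(μ * t / ε)) := Real.exp_pos _
  calc |Mf t - ξ * γ * A t / μ|
      ≤ |Real.exp (-(μ * t / ε)) * (M₀ - ξ * γ * A t / μ)|
        + |∫ s in (0:ℝ)..t, Real.exp (-(μ * (t - s) / ε)) * (ξ * γ / ε) * (A s - A t)| := by
        rw [decomp]; exact abs_add_le _ _
    _ ≤ Real.exp (-(μ * t / ε)) * (M₀ + ξ * γ * L / μ) + ξ * γ * K * ε / μ ^ 2 := by
        rw [abs_mul, abs_of_pos hEpos]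
        exact add_le_add (mul_le_mul_of_nonneg_left h1 hEpos.le) habs

theorem stmt19 (μ ξ γ L K M₀ : ℝ) (hμ : 0 < μ) (hξ : 0 < ξ) (hγ : 0 < γ)
    (A : ℝ → ℝ) (hAbd : ∀ t, 0 ≤ t → 0 ≤ A t ∧ A t ≤ L)
    (hALip : ∀ s t : ℝ, |A s - A t| ≤ K * |s - t|)
    (M : ℝ → ℝ → ℝ)
    (hM : ∀ ε : ℝ, 0 < ε → ∀ t : ℝ, 0 ≤ t →
      HasDerivAt (M ε) ((ξ * γ * A t - μ * M ε t) / ε) t)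
    (hM0 : ∀ ε : ℝ, 0 < ε → M ε 0 = M₀) (hM₀ : 0 ≤ M₀) :
    ∀ t₀ : ℝ, 0 < t₀ → ∀ δ : ℝ, 0 < δ →
      ∃ ε₀ : ℝ, 0 < ε₀ ∧ ∀ ε : ℝ, 0 < ε → ε < ε₀ →
        ∀ t : ℝ, t₀ ≤ t → |M ε t - ξ * γ * A t / μ| < δ := by
  intro t₀ ht₀ δ hδ
  have hK : 0 ≤ K := by
    have h := hALip 1 0
    simp only [sub_zero, abs_one, mul_one] at h
    exact le_trans (abs_nonneg _) h
  have hL : 0 ≤ L := le_trans (hAbd 0 le_rfl).1 (hAbd 0 le_rfl).2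
  have hBL : 0 ≤ M₀ + ξ * γ * L / μ := by
    have : 0 ≤ ξ * γ * L / μ := div_nonneg (by positivity) hμ.le
    linarith
  set C : ℝ := (M₀ + ξ * γ * L / μ) / (μ * t₀) + ξ * γ * K / μ ^ 2 with hCdef
  clear_value C
  have hC : 0 ≤ C := by
    have h1 : 0 ≤ (M₀ + ξ * γ * L / μ) / (μ * t₀) := div_nonneg hBL (by positivity)
    have h2 : 0 ≤ ξ * γ * K / μ ^ 2 := div_nonneg (by positivity) (by positivity)
    simp only [hCdef]; linarith
  refine ⟨δ / (C + 1), by positivity, fun ε hε hεδ t ht => ?_⟩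
  have ht' : 0 < t := lt_of_lt_of_le ht₀ ht
  have hb := keybound μ ξ γ L K M₀ hμ hξ hγ A hAbd hALip (M ε) ε hε (hM ε hε)
    (hM0 ε hε) hM₀ t ht'
  -- exponential bound
  have hexp : Real.exp (-(μ * t / ε)) ≤ ε / (μ * t₀) := by
    have hy : 0 < μ * t₀ / ε := by positivity
    have h1 : Real.exp (-(μ * t / ε)) ≤ Real.exp (-(μ * t₀ / ε)) := by
      apply Real.exp_le_exp.mpr
      have : μ * t₀ / ε ≤ μ * t / ε := by
        apply div_le_div_of_nonneg_right ?_ hε.le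
        nlinarith
      linarith
    have h2 : Real.exp (-(μ * t₀ / ε)) ≤ ε / (μ * t₀) := by
      rw [Real.exp_neg]
      have h3 : μ * t₀ / ε ≤ Real.exp (μ * t₀ / ε) := by
        nlinarith [Real.add_one_le_exp (μ * t₀ / ε)]
      calc (Real.exp (μ * t₀ / ε))⁻¹ ≤ (μ * t₀ / ε)⁻¹ :=
            inv_anti₀ hy h3
        _ = ε / (μ * t₀) := by rw [inv_div]
    linarith
  have hfinal : |M ε t - ξ * γ * A t / μ| ≤ ε * C := by
    calc |M ε t - ξ * γ * A t / μ|
        ≤ Real.exp (-(μ * t / ε)) * (M₀ + ξ * γ * L / μ) + ξ * γ * K * ε / μ ^ 2 := hb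
      _ ≤ ε / (μ * t₀) * (M₀ + ξ * γ * L / μ) + ξ * γ * K * ε / μ ^ 2 :=
          add_le_add (mul_le_mul_of_nonneg_right hexp hBL) le_rfl
      _ = ε * C := by simp only [hCdef]; ring
  have hlt : ε * (C + 1) < δ := by
    have := (lt_div_iff₀ (by positivity : (0:ℝ) < C + 1)).mp hεδ
    linarith
  have hexpand : ε * (C + 1) = ε * C + ε := by ring
  linarith
end
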